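/- Define S = {x ∈ ℝ³ : ‖x‖² = 1/2}, and for a point x ∈ S write conditions on signs of coordinates. Let A = {x ∈ S : x₁ ≤ x₂ and x₁ ≤ x₃, and (x₁ ≥ 0, x₂ ≤ 0, x₃ ≤ 0) or (x₁ ≤ 0, x₂ ≥ 0, x₃ ≤ 0) or (x₁ ≤ 0, x₂ ≤ 0, x₃ ≥ 0)}. Then for any two points x, y ∈ A, ‖x − y‖_2 ≤ √(1 + √2/2). -/
import Mathlib

lemma mnn8 {u v : ℝ} (hu : u ≤ 0) (hv : v ≤ 0) : 0 ≤ u * v := by nlinarith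

lemma key8 (a b c p q r : ℝ) (ha : a ≤ c) (hc : c ≤ 0) (hb : 0 ≤ b)
    (hp : p ≤ q) (hq : q ≤ 0) (hr : 0 ≤ r)
    (hx : a^2 + b^2 + c^2 = 1/2) (hy : p^2 + q^2 + r^2 = 1/2) :
    -(Real.sqrt 2 / 4) ≤ a * p + b * q + c * r := by
  have hs0 : (0:ℝ) ≤ Real.sqrt 2 := Real.sqrt_nonneg 2
  have hs2 : Real.sqrt 2 ^ 2 = 2 := Real.sq_sqrt (by norm_num)
  have hap : 0 ≤ a * p := mnn8 (ha.trans hc) (hp.trans hq)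
  have hu0 : 0 ≤ -(b*q + c*r) := by
    nlinarith [mul_nonneg hb (neg_nonneg.2 hq), mul_nonneg (neg_nonneg.2 hc) hr]
  have h1 : b^2 + 2*c^2 ≤ 1/2 := by nlinarith [mul_nonneg (sub_nonneg.2 ha) (by linarith : 0 ≤ -(c+a))]
  have h2 : 2*q^2 + r^2 ≤ 1/2 := by nlinarith [mul_nonneg (sub_nonneg.2 hp) (by linarith : 0 ≤ -(q+p))]
  have h3 : (b^2 + 2*c^2) * (q^2 + r^2/2) ≤ 1/8 := by
    nlinarith [sq_nonneg b, sq_nonneg c, sq_nonneg q, sq_nonneg r]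
  have ht2 : (b*q + c*r)^2 ≤ 1/8 := by nlinarith [sq_nonneg (b*r - 2*c*q)]
  have ht : -(b*q + c*r) ≤ Real.sqrt 2 / 4 := by nlinarith [ht2, hs2, hs0, hu0]
  linarith

theorem stmt8 (A : Set (EuclideanSpace ℝ (Fin 3)))
    (hA : A = {x | ‖x‖ ^ 2 = 1 / 2 ∧ x 0 ≤ x 1 ∧ x 0 ≤ x 2 ∧
      ((0 ≤ x 0 ∧ x 1 ≤ 0 ∧ x 2 ≤ 0) ∨ (x 0 ≤ 0 ∧ 0 ≤ x 1 ∧ x 2 ≤ 0) ∨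
       (x 0 ≤ 0 ∧ x 1 ≤ 0 ∧ 0 ≤ x 2))}) :
    ∀ x ∈ A, ∀ y ∈ A, dist x y ≤ Real.sqrt (1 + Real.sqrt 2 / 2) := by
  intro x hx y hy
  rw [hA] at hx hy
  obtain ⟨hxn, hx01, hx02, hxc⟩ := hx
  obtain ⟨hyn, hy01, hy02, hyc⟩ := hy
  have hs0 : (0:ℝ) ≤ Real.sqrt 2 := Real.sqrt_nonneg 2
  have hx2 : x 0 ^ 2 + x 1 ^ 2 + x 2 ^ 2 = 1/2 := by
    rw [PiLp.norm_sq_eq_of_L2] at hxn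
    simpa [Fin.sum_univ_three, sq_abs] using hxn
  have hy2 : y 0 ^ 2 + y 1 ^ 2 + y 2 ^ 2 = 1/2 := by
    rw [PiLp.norm_sq_eq_of_L2] at hyn
    simpa [Fin.sum_univ_three, sq_abs] using hyn
  have hxc' : (x 0 ≤ 0 ∧ 0 ≤ x 1 ∧ x 2 ≤ 0) ∨ (x 0 ≤ 0 ∧ x 1 ≤ 0 ∧ 0 ≤ x 2) := by
    rcases hxc with h | h | h
    · exfalso; nlinarith [h.1, h.2.1, h.2.2, hx01, hx02]
    · exact Or.inl h
    · exact Or.inr h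
  have hyc' : (y 0 ≤ 0 ∧ 0 ≤ y 1 ∧ y 2 ≤ 0) ∨ (y 0 ≤ 0 ∧ y 1 ≤ 0 ∧ 0 ≤ y 2) := by
    rcases hyc with h | h | h
    · exfalso; nlinarith [h.1, h.2.1, h.2.2, hy01, hy02]
    · exact Or.inl h
    · exact Or.inr h
  have hkey : -(Real.sqrt 2 / 4) ≤ x 0 * y 0 + x 1 * y 1 + x 2 * y 2 := by
    rcases hxc' with hX | hX <;> rcases hyc' with hY | hY
    · nlinarith [mnn8 hX.1 hY.1, mul_nonneg hX.2.1 hY.2.1,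
        mnn8 hX.2.2 hY.2.2]
    · have := key8 (x 0) (x 1) (x 2) (y 0) (y 1) (y 2) hx02 hX.2.2 hX.2.1
        hy01 hY.2.1 hY.2.2 hx2 hy2
      linarith
    · have := key8 (y 0) (y 1) (y 2) (x 0) (x 1) (x 2) hy02 hY.2.2 hY.2.1
        hx01 hX.2.1 hX.2.2 hy2 hx2
      nlinarith
    · nlinarith [mnn8 hX.1 hY.1,
        mnn8 hX.2.1 hY.2.1, mul_nonneg hX.2.2 hY.2.2]
  have hd : dist x y ^ 2 = (x 0 - y 0)^2 + (x 1 - y 1)^2 + (x 2 - y 2)^2 := by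
    rw [EuclideanSpace.dist_eq, Real.sq_sqrt (by positivity)]
    simp [Fin.sum_univ_three, Real.dist_eq, sq_abs]
  have hexp : (x 0 - y 0)^2 + (x 1 - y 1)^2 + (x 2 - y 2)^2
      = 1 - 2*(x 0 * y 0 + x 1 * y 1 + x 2 * y 2) := by linear_combination hx2 + hy2
  have h1 : dist x y ^ 2 ≤ 1 + Real.sqrt 2 / 2 := by rw [hd, hexp]; linarith [hkey]
  calc dist x y = Real.sqrt (dist x y ^ 2) := (Real.sqrt_sq dist_nonneg).symm
    _ ≤ Real.sqrt (1 + Real.sqrt 2 / 2) := Real.sqrt_le_sqrt h1
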